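/- Let x0 < −√3/4 and let G₁(x) = g₁(x)/h(x) for x ∈ [2x0, 0], where g₁(x) = 3x(2x − 3x0) and h(x) = ((x − x0)^2 + (4/9) g(x)^4)^{1/2} with g(x) = (9x(2x0 − x)/4)^{1/3}. Then C₇(x0) ≤ G₁(x) ≤ C₈(x0) for every x ∈ [2x0, 0], where C₇(x0) = −(3/2)^3 x0^2 / (x0^2 − 3/64)^{1/2}, and C₈(x0) = 2^{8/3} · 3 |x0| / (2^{4/3} + 9 |x0|^{2/3})^{1/2} if −1/2 < x0 < −√3/4, while C₈(x0) = 6 x0^2 / (x0^2 − 3/64)^{1/2} if x0 ≤ −1/2. -/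
import Mathlib

open Set

set_option maxHeartbeats 1000000 in
theorem G1_bounds_large_x0
    (x0 : ℝ) (hx0 : x0 < -Real.sqrt 3 / 4)
    (g h g1 G1 : ℝ → ℝ)
    (hg : ∀ x : ℝ, g x = (9 * x * (2 * x0 - x) / 4) ^ ((1 : ℝ) / 3))
    (hh : ∀ x : ℝ, h x = ((x - x0) ^ 2 + (4 / 9) * (g x) ^ 4) ^ ((1 : ℝ) / 2))
    (hg1 : ∀ x : ℝ, g1 x = 3 * x * (2 * x - 3 * x0))
    (hG1 : ∀ x : ℝ, G1 x = g1 x / h x)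
    (C7 C8 : ℝ)
    (hC7 : C7 = -(3 / 2) ^ 3 * x0 ^ 2 / (x0 ^ 2 - 3 / 64) ^ ((1 : ℝ) / 2))
    (hC8 : C8 = if -1 / 2 < x0 then
        2 ^ ((8 : ℝ) / 3) * 3 * |x0| /
          (2 ^ ((4 : ℝ) / 3) + 9 * |x0| ^ ((2 : ℝ) / 3)) ^ ((1 : ℝ) / 2)
      else 6 * x0 ^ 2 / (x0 ^ 2 - 3 / 64) ^ ((1 : ℝ) / 2)) :
    ∀ x ∈ Icc (2 * x0) 0, C7 ≤ G1 x ∧ G1 x ≤ C8 := by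
  intro x hx
  obtain ⟨hx1, hx2⟩ := hx
  have hs3 : Real.sqrt 3 ^ 2 = 3 := Real.sq_sqrt (by norm_num)
  have hs3nn : (0:ℝ) ≤ Real.sqrt 3 := Real.sqrt_nonneg 3
  have hx0neg : x0 < 0 := by linarith
  have hx0sq : 3/16 < x0 ^ 2 := by
    have h1 : 0 < -x0 - Real.sqrt 3 / 4 := by linarith
    have h2 : 0 < -x0 + Real.sqrt 3 / 4 := by linarith
    linarith [mul_pos h1 h2, hs3]
  have hA : 0 ≤ 9 * x * (2 * x0 - x) / 4 := by
    linarith [mul_nonneg (by linarith : (0:ℝ) ≤ -x) (by linarith : (0:ℝ) ≤ x - 2*x0)]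
  have hQ0 : 0 ≤ g x := by rw [hg x]; exact Real.rpow_nonneg hA _
  have hQ3 : (g x) ^ 3 = 9 * x * (2 * x0 - x) / 4 := by
    rw [hg x, ← Real.rpow_natCast ((9 * x * (2 * x0 - x) / 4) ^ ((1:ℝ)/3)) 3,
      ← Real.rpow_mul hA]
    norm_num
  have hQ4 : 0 ≤ (g x) ^ 4 := by positivity
  have hh2 : h x ^ 2 = (x - x0)^2 + 4/9 * (g x)^4 := by
    rw [hh x, ← Real.rpow_natCast (((x - x0) ^ 2 + (4/9) * (g x) ^ 4) ^ ((1:ℝ)/2)) 2,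
      ← Real.rpow_mul (by positivity)]
    norm_num
  have hhpos : 0 < h x := by
    have hBpos : 0 < (x - x0)^2 + (4/9) * (g x)^4 := by
      rcases eq_or_ne x x0 with he | hne
      · have hApos : 0 < 9 * x * (2*x0 - x) / 4 := by rw [he]; linarith [hx0sq]
        have hQpos : 0 < g x := by rw [hg x]; exact Real.rpow_pos_of_pos hApos _
        linarith [pow_pos hQpos 4, sq_nonneg (x - x0)]
      · have h1 : (x - x0) ≠ 0 := sub_ne_zero.mpr hne
        have h2 : (x - x0)^2 ≠ 0 := pow_ne_zero 2 h1
        have h3 : 0 < (x - x0)^2 := (sq_nonneg _).lt_of_ne (Ne.symm h2)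
        linarith [hQ4]
    rw [hh x]; exact Real.rpow_pos_of_pos hBpos _
  have hminx : (x - x0)^2 ≤ h x ^ 2 := by rw [hh2]; linarith [hQ4]
  have hmin : x0^2 - 3/64 ≤ h x ^ 2 := by
    rw [hh2]
    linarith [mul_nonneg (sq_nonneg (g x - 3/4)) (sq_nonneg (g x + 1/4)),
      sq_nonneg (g x - 3/4), hQ3]
  have hg1lb : -(27/8) * x0^2 ≤ g1 x := by
    rw [hg1 x]; linarith [sq_nonneg (x - 3/4 * x0)]
  have hg1ub : g1 x ≤ 6 * x0^2 := by
    rw [hg1 x]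
    linarith [mul_nonneg (by linarith : (0:ℝ) ≤ x - 2*x0) (by linarith : (0:ℝ) ≤ -(2*x + x0))]
  have hdpos : (0:ℝ) < x0^2 - 3/64 := by linarith
  have hm2 : ((x0^2 - 3/64) ^ ((1:ℝ)/2)) ^ 2 = x0^2 - 3/64 := by
    rw [← Real.rpow_natCast ((x0^2 - 3/64) ^ ((1:ℝ)/2)) 2, ← Real.rpow_mul hdpos.le]
    norm_num
  have hmpos : 0 < (x0^2 - 3/64) ^ ((1:ℝ)/2) := Real.rpow_pos_of_pos hdpos _
  have hmh : (x0^2 - 3/64) ^ ((1:ℝ)/2) ≤ h x := by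
    have h1 : ((x0^2 - 3/64) ^ ((1:ℝ)/2)) ^ 2 ≤ h x ^ 2 := by rw [hm2]; exact hmin
    calc (x0^2 - 3/64) ^ ((1:ℝ)/2)
        = Real.sqrt (((x0^2 - 3/64) ^ ((1:ℝ)/2))^2) := (Real.sqrt_sq hmpos.le).symm
      _ ≤ Real.sqrt (h x ^ 2) := Real.sqrt_le_sqrt h1
      _ = h x := Real.sqrt_sq hhpos.le
  constructor
  · rw [hG1 x, hC7, div_le_div_iff₀ hmpos hhpos]
    linarith [mul_nonneg (by linarith : (0:ℝ) ≤ g1 x + 27/8 * x0^2) hmpos.le,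
      mul_nonneg (by positivity : (0:ℝ) ≤ 27/8 * x0^2)
        (by linarith : (0:ℝ) ≤ h x - (x0^2 - 3/64) ^ ((1:ℝ)/2))]
  · by_cases hcase : -1/2 < x0
    · rw [hG1 x, hC8, if_pos hcase]
      have hT0 : 0 ≤ |x0| ^ ((2:ℝ)/3) := Real.rpow_nonneg (abs_nonneg x0) _
      have hT3 : (|x0| ^ ((2:ℝ)/3)) ^ 3 = x0 ^ 2 := by
        rw [← Real.rpow_natCast (|x0| ^ ((2:ℝ)/3)) 3, ← Real.rpow_mul (abs_nonneg x0)]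
        rw [show ((2:ℝ)/3 * ((3:ℕ):ℝ)) = ((2:ℕ):ℝ) by push_cast; norm_num]
        rw [Real.rpow_natCast, sq_abs]
      have hD0 : (0:ℝ) < (2:ℝ) ^ ((1:ℝ)/3) := Real.rpow_pos_of_pos two_pos _
      have hD3 : ((2:ℝ) ^ ((1:ℝ)/3)) ^ 3 = 2 := by
        rw [← Real.rpow_natCast ((2:ℝ) ^ ((1:ℝ)/3)) 3, ← Real.rpow_mul (by norm_num : (0:ℝ) ≤ 2)]
        norm_num
      have hx14 : x0^2 < 1/4 := by
        linarith [mul_pos (by linarith : (0:ℝ) < x0 + 1/2) (by linarith : (0:ℝ) < -x0)]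
      have hTD : |x0| ^ ((2:ℝ)/3) ≤ (2:ℝ) ^ ((1:ℝ)/3) / 2 := by
        by_contra hcon
        push_neg at hcon
        have hq : (0:ℝ) < ((2:ℝ) ^ ((1:ℝ)/3))^2 + 2*((2:ℝ) ^ ((1:ℝ)/3))*(|x0| ^ ((2:ℝ)/3))
            + 4*(|x0| ^ ((2:ℝ)/3))^2 := by positivity
        linarith [mul_pos (by linarith : (0:ℝ) < 2*(|x0| ^ ((2:ℝ)/3)) - (2:ℝ) ^ ((1:ℝ)/3)) hq,
          hT3, hD3, hx14]
      have hdenpos : (0:ℝ) < 2 ^ ((4:ℝ)/3) + 9 * |x0| ^ ((2:ℝ)/3) := by positivity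
      have hW2pos : 0 < ((2:ℝ) ^ ((4:ℝ)/3) + 9 * |x0| ^ ((2:ℝ)/3)) ^ ((1:ℝ)/2) :=
        Real.rpow_pos_of_pos hdenpos _
      have hW22 : (((2:ℝ) ^ ((4:ℝ)/3) + 9 * |x0| ^ ((2:ℝ)/3)) ^ ((1:ℝ)/2)) ^ 2
          = 2 ^ ((4:ℝ)/3) + 9 * |x0| ^ ((2:ℝ)/3) := by
        rw [← Real.rpow_natCast (((2:ℝ) ^ ((4:ℝ)/3) + 9 * |x0| ^ ((2:ℝ)/3)) ^ ((1:ℝ)/2)) 2,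
          ← Real.rpow_mul hdenpos.le]
        norm_num
      have h43 : (2:ℝ) ^ ((4:ℝ)/3) = 2 * (2:ℝ) ^ ((1:ℝ)/3) := by
        rw [show (4:ℝ)/3 = 1 + 1/3 by norm_num, Real.rpow_add two_pos, Real.rpow_one]
      have h83 : ((2:ℝ) ^ ((8:ℝ)/3)) ^ 2 = 32 * (2:ℝ) ^ ((1:ℝ)/3) := by
        rw [← Real.rpow_natCast ((2:ℝ) ^ ((8:ℝ)/3)) 2, ← Real.rpow_mul (by norm_num : (0:ℝ) ≤ 2)]
        rw [show ((8:ℝ)/3 * ((2:ℕ):ℝ)) = ((5:ℕ):ℝ) + 1/3 by push_cast; norm_num]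
        rw [Real.rpow_add two_pos, Real.rpow_natCast]
        norm_num
      rw [div_le_div_iff₀ hhpos hW2pos]
      by_cases hg1s : g1 x ≤ 0
      · have hL : g1 x * ((2 ^ ((4:ℝ)/3) + 9 * |x0| ^ ((2:ℝ)/3)) ^ ((1:ℝ)/2)) ≤ 0 :=
          mul_nonpos_of_nonpos_of_nonneg hg1s hW2pos.le
        have hR : (0:ℝ) ≤ 2 ^ ((8:ℝ)/3) * 3 * |x0| * h x := by positivity
        linarith
      · push_neg at hg1s
        have hg1v : g1 x = 3 * x * (2 * x - 3 * x0) := hg1 x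
        have hxlt : x < 0 := by
          rcases hx2.lt_or_eq with hlt | heq
          · exact hlt
          · exfalso; rw [hg1v, heq] at hg1s; norm_num at hg1s
        have h2x : 2*x - 3*x0 < 0 := by
          by_contra hcon
          push_neg at hcon
          linarith [mul_nonneg (by linarith : (0:ℝ) ≤ -x) hcon, hg1s, hg1v]
        have ha : (0:ℝ) ≤ x - 2*x0 := by linarith
        have hb : (0:ℝ) ≤ 3*x0 - 2*x := by linarith
        have hpoly : 13 * (g1 x)^2 ≤ 576 * x0^2 * (x - x0)^2 := by
          have t1 : (0:ℝ) ≤ (x-2*x0)^4 := by positivity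
          have t2 : (0:ℝ) ≤ (x-2*x0)^3*(3*x0-2*x) := mul_nonneg (pow_nonneg ha 3) hb
          have t3 : (0:ℝ) ≤ (x-2*x0)^2*(3*x0-2*x)^2 := by positivity
          have t4 : (0:ℝ) ≤ (x-2*x0)*(3*x0-2*x)^3 := mul_nonneg ha (pow_nonneg hb 3)
          have t5 : (0:ℝ) ≤ (3*x0-2*x)^4 := by positivity
          have key : 13 * (3 * x * (2 * x - 3 * x0))^2
              + (2304*(x-2*x0)^4 + 6912*(x-2*x0)^3*(3*x0-2*x) + 6435*(x-2*x0)^2*(3*x0-2*x)^2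
                + 2052*(x-2*x0)*(3*x0-2*x)^3 + 108*(3*x0-2*x)^4)
              = 576 * x0^2 * (x - x0)^2 := by ring
          rw [hg1v]
          linarith
        have hNm2 : ((2:ℝ) ^ ((8:ℝ)/3) * 3 * |x0|)^2 = 288 * ((2:ℝ) ^ ((1:ℝ)/3)) * x0^2 := by
          have e : ((2:ℝ) ^ ((8:ℝ)/3) * 3 * |x0|)^2 = ((2:ℝ) ^ ((8:ℝ)/3))^2 * 9 * |x0|^2 := by
            ring
          rw [e, h83, sq_abs]; ring
        have hsq2 : (g1 x)^2 * (2 ^ ((4:ℝ)/3) + 9 * |x0| ^ ((2:ℝ)/3))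
            ≤ 288 * ((2:ℝ) ^ ((1:ℝ)/3)) * x0^2 * h x ^ 2 := by
          rw [h43]
          linarith [mul_le_mul_of_nonneg_left hTD (sq_nonneg (g1 x)),
            mul_le_mul_of_nonneg_right hpoly hD0.le,
            mul_le_mul_of_nonneg_left hminx
              (by positivity : (0:ℝ) ≤ 288 * ((2:ℝ) ^ ((1:ℝ)/3)) * x0^2)]
        have hfin : (g1 x * ((2 ^ ((4:ℝ)/3) + 9 * |x0| ^ ((2:ℝ)/3)) ^ ((1:ℝ)/2)))^2
            ≤ (2 ^ ((8:ℝ)/3) * 3 * |x0| * h x)^2 := by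
          have e1 : (g1 x * ((2 ^ ((4:ℝ)/3) + 9 * |x0| ^ ((2:ℝ)/3)) ^ ((1:ℝ)/2)))^2
              = (g1 x)^2 * (2 ^ ((4:ℝ)/3) + 9 * |x0| ^ ((2:ℝ)/3)) := by
            rw [mul_pow, hW22]
          have e2 : ((2:ℝ) ^ ((8:ℝ)/3) * 3 * |x0| * h x)^2
              = 288 * ((2:ℝ) ^ ((1:ℝ)/3)) * x0^2 * h x ^ 2 := by
            rw [mul_pow, hNm2]
          rw [e1, e2]; exact hsq2
        have hL0 : 0 ≤ g1 x * ((2 ^ ((4:ℝ)/3) + 9 * |x0| ^ ((2:ℝ)/3)) ^ ((1:ℝ)/2)) :=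
          mul_nonneg hg1s.le hW2pos.le
        have hR0 : (0:ℝ) ≤ 2 ^ ((8:ℝ)/3) * 3 * |x0| * h x := by positivity
        calc g1 x * ((2 ^ ((4:ℝ)/3) + 9 * |x0| ^ ((2:ℝ)/3)) ^ ((1:ℝ)/2))
            = Real.sqrt ((g1 x * ((2 ^ ((4:ℝ)/3) + 9 * |x0| ^ ((2:ℝ)/3)) ^ ((1:ℝ)/2)))^2) :=
              (Real.sqrt_sq hL0).symm
          _ ≤ Real.sqrt ((2 ^ ((8:ℝ)/3) * 3 * |x0| * h x)^2) := Real.sqrt_le_sqrt hfin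
          _ = 2 ^ ((8:ℝ)/3) * 3 * |x0| * h x := Real.sqrt_sq hR0
    · rw [hG1 x, hC8, if_neg hcase, div_le_div_iff₀ hhpos hmpos]
      linarith [mul_nonneg (by linarith : (0:ℝ) ≤ 6*x0^2 - g1 x) hmpos.le,
        mul_nonneg (by positivity : (0:ℝ) ≤ 6*x0^2)
          (by linarith : (0:ℝ) ≤ h x - (x0^2 - 3/64) ^ ((1:ℝ)/2))]
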